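/- Let A be a finite abelian group and G a finite group with |G| > 1 and gcd(|A|, |G|) = 1. Then there is no finite group H such that: |H| = |A|·|G|, the abelianization H/[H,H] is isomorphic to A, and the center Z(H) contains a subgroup isomorphic to G. -/

import Mathlib

theorem stmt2 {A : Type*} [CommGroup A] [Fintype A] {G : Type*} [Group G] [Fintype G]
    (hG : 1 < Fintype.card G)
    (hcop : Nat.Coprime (Fintype.card A) (Fintype.card G)) :
    ∀ (H : Type*) [Group H] [Fintype H],
      Fintype.card H = Fintype.card A * Fintype.card G →
      Nonempty (Abelianization H ≃* A) →
      (∃ K : Subgroup H, K ≤ Subgroup.center H ∧ Nonempty (K ≃* G)) →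
      False := by
  intro H _ _ hcard ⟨e⟩ ⟨K, hKZ, ⟨f⟩⟩
  -- cardinalities
  have hKG : Nat.card K = Fintype.card G := by
    rw [Nat.card_congr f.toEquiv, Nat.card_eq_fintype_card]
  have hAb : Nat.card (Abelianization H) = Fintype.card A := by
    rw [Nat.card_congr e.toEquiv, Nat.card_eq_fintype_card]
  -- the index of the center divides |A|
  have hdvdZ : Fintype.card G ∣ Nat.card (Subgroup.center H) := by
    rw [← hKG]; exact Subgroup.card_dvd_of_le hKZ
  obtain ⟨t, ht⟩ := hdvdZ
  have hmul : Nat.card (Subgroup.center H) * (Subgroup.center H).index = Nat.card H :=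
    Subgroup.card_mul_index _
  have hidx : t * (Subgroup.center H).index = Fintype.card A := by
    have hG0 : 0 < Fintype.card G := Fintype.card_pos
    have : Fintype.card G * (t * (Subgroup.center H).index) =
        Fintype.card G * Fintype.card A := by
      rw [← mul_assoc, ← ht, hmul, Nat.card_eq_fintype_card, hcard, mul_comm]
    exact Nat.eq_of_mul_eq_mul_left hG0 this
  have hidxA : (Subgroup.center H).index ∣ Fintype.card A := Dvd.intro_left t hidx
  -- pick a nontrivial element of K
  have : Nontrivial K := by
    exact Finite.one_lt_card_iff_nontrivial.mp (by rw [hKG]; exact hG)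
  obtain ⟨x, hx⟩ := exists_ne (1 : K)
  set k : H := (x : H) with hk
  have hkK : k ∈ K := x.2
  have hk1 : k ≠ 1 := fun h => hx (Subtype.ext h)
  -- k lies in the commutator subgroup
  have hkord : orderOf k ∣ Fintype.card G := by
    rw [← hKG]; exact Subgroup.orderOf_dvd_natCard K hkK
  have hofk : Abelianization.of k = 1 := by
    have h1 : orderOf (Abelianization.of k) ∣ Fintype.card G :=
      (orderOf_map_dvd _ k).trans hkord
    have h2 : orderOf (Abelianization.of k) ∣ Fintype.card A := by
      rw [← hAb]; exact orderOf_dvd_natCard _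
    have : orderOf (Abelianization.of k) = 1 :=
      Nat.dvd_one.mp (hcop ▸ Nat.dvd_gcd h2 h1)
    exact orderOf_eq_one_iff.mp this
  have hkcomm : k ∈ commutator H := (QuotientGroup.eq_one_iff k).mp hofk
  -- the transfer map kills k, so k ^ (index of center) = 1
  have htr : MonoidHom.transferCenterPow H k = 1 :=
    (MonoidHom.transferCenterPow H).mem_ker.mp (by
      have hle : commutator H ≤ (MonoidHom.transferCenterPow H).ker := by
        rw [commutator_eq_closure, Subgroup.closure_le]
        rintro x ⟨p, q, rfl⟩
        rw [SetLike.mem_coe, MonoidHom.mem_ker, map_commutatorElement,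
          commutatorElement_eq_one_iff_mul_comm]
        exact Subtype.ext (Subgroup.mem_center_iff.mp (MonoidHom.transferCenterPow H q).2 _)
      exact hle hkcomm)
  have hpow : k ^ (Subgroup.center H).index = 1 := by
    have := congrArg (Subtype.val) htr
    rwa [MonoidHom.transferCenterPow_apply] at this
  -- coprimality forces k = 1
  have hdvd1 : orderOf k ∣ (Subgroup.center H).index := orderOf_dvd_of_pow_eq_one hpow
  have : orderOf k = 1 :=
    Nat.dvd_one.mp (hcop ▸ Nat.dvd_gcd (hdvd1.trans hidxA) hkord)
  exact hk1 (orderOf_eq_one_iff.mp this)
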